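/- arXiv:2505.06204 — 3 statements merged into one kernel-verified Lean document; each statement's English description precedes it below -/
import Mathlib

section
/- Let f : ℝⁿ × ℝᵐ → ℝⁿ be affine in the control: f(x,u) = f₀(x) + Σᵢ fᵢ(x)uᵢ, where each fᵢ is k-Lipschitz and has linear growth with constant c. Let u, v : [t₀,T] → ℝᵐ be measurable controls bounded by M, and let x_u, x_v solve the corresponding integral equations with the same initial condition x₀. Then sup_{t∈[t₀,T]} |x_u(t) − x_v(t)| ≤ C · ‖u − v‖_{L²(t₀,T)}, where C depends only on k, c, M, T − t₀, and |x₀|. In particular, the map u ↦ x_u is continuous from L²(t₀,T;ℝᵐ) (restricted to controls bounded by M) into C([t₀,T];ℝⁿ) with the sup norm. -/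
open MeasureTheory intervalIntegral Set



/-- Integral form of Grönwall's inequality. -/
lemma my_gronwall {g : ℝ → ℝ} {t₀ T A K : ℝ} (ht : t₀ ≤ T) (hA : 0 ≤ A) (hK : 0 ≤ K)
    (hgc : ContinuousOn g (Set.Icc t₀ T))
    (hg0 : ∀ t ∈ Set.Icc t₀ T, 0 ≤ g t)
    (hb : ∀ t ∈ Set.Icc t₀ T, g t ≤ A + K * ∫ σ in t₀..t, g σ) :
    ∀ t ∈ Set.Icc t₀ T, g t ≤ A * Real.exp (K * (T - t₀)) := by
  set g' : ℝ → ℝ := fun t => g (projIcc t₀ T ht t) with hg'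
  have hgt_cont : Continuous g' := hgc.restrict.comp continuous_projIcc
  have hagree : ∀ t ∈ Set.Icc t₀ T, g' t = g t := by
    intro t htm
    simp [hg', projIcc_of_mem ht htm]
  have hgt0 : ∀ t, 0 ≤ g' t := fun t => hg0 _ (projIcc t₀ T ht t).2
  set h : ℝ → ℝ := fun t => ∫ σ in t₀..t, g' σ with hh
  have hderiv : ∀ t : ℝ, HasDerivAt h (g' t) t := fun t =>
    (hgt_cont.integral_hasStrictDerivAt t₀ t).hasDerivAt
  have hcont : Continuous h := by
    refine continuous_iff_continuousAt.2 fun t => (hderiv t).continuousAt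
  have hint_eq : ∀ t ∈ Set.Icc t₀ T, h t = ∫ σ in t₀..t, g σ := by
    intro t htm
    refine intervalIntegral.integral_congr fun σ hσ => ?_
    have : σ ∈ Set.Icc t₀ T := by
      rw [uIcc_of_le htm.1] at hσ
      exact ⟨hσ.1, hσ.2.trans htm.2⟩
    exact hagree σ this
  have hh0 : ∀ t ∈ Set.Icc t₀ T, 0 ≤ h t := by
    intro t htm
    exact intervalIntegral.integral_nonneg htm.1 fun σ _ => hgt0 σ
  have key := norm_le_gronwallBound_of_norm_deriv_right_le (f := h) (f' := g')
    (δ := 0) (K := K) (ε := A) (a := t₀) (b := T) hcont.continuousOn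
    (fun x _ => (hderiv x).hasDerivWithinAt)
    (by simp [hh])
    (by
      intro x hx
      have hx' : x ∈ Set.Icc t₀ T := ⟨hx.1, hx.2.le⟩
      rw [Real.norm_eq_abs, Real.norm_eq_abs, abs_of_nonneg (hgt0 x),
        abs_of_nonneg (hh0 x hx'), hagree x hx']
      have := hb x hx'
      rw [← hint_eq x hx'] at this
      linarith)
  intro t htm
  have h1 : g t ≤ A + K * h t := by
    have := hb t htm
    rw [← hint_eq t htm] at this
    linarith
  have h2 : h t ≤ gronwallBound 0 K A (t - t₀) := by
    have := key t htm
    rwa [Real.norm_eq_abs, abs_of_nonneg (hh0 t htm)] at this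
  rcases eq_or_lt_of_le hK with hK0 | hKpos
  · rw [← hK0] at h1 ⊢
    simpa using h1.trans (by linarith)
  · have hKne : K ≠ 0 := ne_of_gt hKpos
    rw [gronwallBound_of_K_ne_0 hKne] at h2
    simp only at h2
    have hexp : Real.exp (K * (t - t₀)) ≤ Real.exp (K * (T - t₀)) := by
      apply Real.exp_le_exp.2
      nlinarith [htm.2]
    have heq : K * (0 * Real.exp (K * (t - t₀)) + A / K * (Real.exp (K * (t - t₀)) - 1))
        = A * (Real.exp (K * (t - t₀)) - 1) := by field_simp; ring
    have h3 : K * h t ≤ A * (Real.exp (K * (t - t₀)) - 1) := by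
      rw [← heq]; exact mul_le_mul_of_nonneg_left h2 hK
    have h4 : g t ≤ A * Real.exp (K * (t - t₀)) := by nlinarith
    exact h4.trans (mul_le_mul_of_nonneg_left hexp hA)


/-- Elementary Cauchy–Schwarz for interval integrals of nonnegative functions. -/
lemma my_cs {t₀ T : ℝ} (ht : t₀ ≤ T) {φ : ℝ → ℝ} (hφ0 : ∀ σ, 0 ≤ φ σ)
    (hφ : IntervalIntegrable φ MeasureTheory.volume t₀ T)
    (hφ2 : IntervalIntegrable (fun σ => φ σ ^ 2) MeasureTheory.volume t₀ T) :
    ∫ σ in t₀..T, φ σ ≤ Real.sqrt (T - t₀) * Real.sqrt (∫ σ in t₀..T, φ σ ^ 2) := by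
  rcases eq_or_lt_of_le ht with rfl | hlt
  · simp
  set L := T - t₀ with hLdef
  have hL : 0 < L := by simp [hLdef]; linarith
  set I := ∫ σ in t₀..T, φ σ ^ 2 with hIdef
  set J := ∫ σ in t₀..T, φ σ with hJdef
  have hI : 0 ≤ I := intervalIntegral.integral_nonneg ht fun σ _ => sq_nonneg _
  have hJ : 0 ≤ J := intervalIntegral.integral_nonneg ht fun σ _ => hφ0 σ
  have key : ∀ s : ℝ, 0 < s → J ≤ (I + L * s) / (2 * Real.sqrt s) := by
    intro s hs
    have hss : 0 < Real.sqrt s := Real.sqrt_pos.2 hs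
    have hpt : ∀ σ ∈ Set.Icc t₀ T, φ σ ≤ (φ σ ^ 2 + s) / (2 * Real.sqrt s) := by
      intro σ _
      rw [le_div_iff₀ (by positivity)]
      nlinarith [Real.sq_sqrt hs.le, sq_nonneg (φ σ - Real.sqrt s)]
    have hint : IntervalIntegrable (fun σ => (φ σ ^ 2 + s) / (2 * Real.sqrt s))
        MeasureTheory.volume t₀ T := (hφ2.add (intervalIntegrable_const)).div_const _
    calc J ≤ ∫ σ in t₀..T, (φ σ ^ 2 + s) / (2 * Real.sqrt s) :=
          intervalIntegral.integral_mono_on ht hφ hint hpt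
      _ = (I + L * s) / (2 * Real.sqrt s) := by
          rw [intervalIntegral.integral_div, intervalIntegral.integral_add hφ2
            intervalIntegrable_const, intervalIntegral.integral_const]
          simp [hIdef, hLdef, smul_eq_mul, mul_comm]
  have key2 : ∀ δ : ℝ, 0 < δ → J ≤ Real.sqrt (L * (I + δ)) := by
    intro δ hδ
    have hs : 0 < (I + δ) / L := by positivity
    refine (key _ hs).trans ?_
    rw [div_le_iff₀ (by positivity)]
    have hsqrteq : Real.sqrt ((I + δ) / L) * Real.sqrt (L * (I + δ)) = I + δ := by
      rw [← Real.sqrt_mul (le_of_lt hs)]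
      have : (I + δ) / L * (L * (I + δ)) = (I + δ) ^ 2 := by field_simp
      rw [this, Real.sqrt_sq (by positivity)]
    have hLs : L * ((I + δ) / L) = I + δ := by field_simp
    nlinarith [hsqrteq, hLs]
  have key3 : J ^ 2 ≤ L * I := by
    refine le_of_forall_pos_le_add fun ε hε => ?_
    have hδ : 0 < ε / L := by positivity
    have := key2 (ε / L) hδ
    have h2 : J ^ 2 ≤ L * (I + ε / L) := by
      have := pow_le_pow_left₀ hJ this 2
      rwa [Real.sq_sqrt (by positivity)] at this
    calc J ^ 2 ≤ L * (I + ε / L) := h2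
      _ = L * I + ε := by field_simp
  rw [← Real.sqrt_mul (le_of_lt hL)]
  exact Real.le_sqrt_of_sq_le key3


set_option maxHeartbeats 1000000 in
/-- the control-to-trajectory map is Lipschitz from `L²` (controls bounded
by `M`) into `C([t₀,T];ℝⁿ)`, with a constant depending only on `k, c, M, T − t₀, |x₀|`. -/
theorem stmt2 {n m : ℕ}
    (f : Fin (m + 1) → EuclideanSpace ℝ (Fin n) → EuclideanSpace ℝ (Fin n))
    (k c M : ℝ) (hk : 0 < k) (hc : 0 < c) (hM : 0 < M)
    (hLip : ∀ i x x', ‖f i x - f i x'‖ ≤ k * ‖x - x'‖)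
    (hgrowth : ∀ i x, ‖f i x‖ ≤ c * (1 + ‖x‖))
    (t₀ T : ℝ) (ht : t₀ ≤ T) (x₀ : EuclideanSpace ℝ (Fin n)) :
    ∃ C : ℝ, 0 < C ∧
      ∀ (u v : ℝ → Fin m → ℝ) (xu xv : ℝ → EuclideanSpace ℝ (Fin n)),
        Measurable u → Measurable v →
        (∀ t i, |u t i| ≤ M) → (∀ t i, |v t i| ≤ M) →
        ContinuousOn xu (Set.Icc t₀ T) → ContinuousOn xv (Set.Icc t₀ T) →
        (∀ t ∈ Set.Icc t₀ T,
          xu t = x₀ + ∫ σ in t₀..t, (f 0 (xu σ) + ∑ i : Fin m, u σ i • f i.succ (xu σ))) →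
        (∀ t ∈ Set.Icc t₀ T,
          xv t = x₀ + ∫ σ in t₀..t, (f 0 (xv σ) + ∑ i : Fin m, v σ i • f i.succ (xv σ))) →
        ∀ t ∈ Set.Icc t₀ T,
          ‖xu t - xv t‖ ≤ C * Real.sqrt (∫ σ in t₀..T, ‖(u σ - v σ : Fin m → ℝ)‖ ^ 2) := by
  have hfc : ∀ i, Continuous (f i) := by
    intro i
    have : LipschitzWith ⟨k, hk.le⟩ (f i) :=
      LipschitzWith.of_dist_le_mul fun x y => by
        rw [dist_eq_norm, dist_eq_norm]; exact hLip i x y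
    exact this.continuous
  set L := T - t₀ with hLdef
  have hL0 : 0 ≤ L := sub_nonneg.2 ht
  set a := c * (1 + (m : ℝ) * M) with hadef
  have ha : 0 < a := by positivity
  set B := (‖x₀‖ + a * L) * Real.exp (a * L) with hBdef
  have hB0 : 0 ≤ B := by positivity
  set K1 := k * (1 + (m : ℝ) * M) with hK1def
  have hK1 : 0 ≤ K1 := by positivity
  set D := (m : ℝ) * (c * (1 + B)) with hDdef
  have hD0 : 0 ≤ D := by positivity
  refine ⟨D * Real.sqrt L * Real.exp (K1 * L) + 1, by positivity, ?_⟩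
  intro u v xu xv hu hv hub hvb hxu hxv hequ heqv
  -- generic facts about the vector field along a trajectory
  have hFnorm : ∀ (w : ℝ → Fin m → ℝ) (x : ℝ → EuclideanSpace ℝ (Fin n)),
      (∀ t i, |w t i| ≤ M) → ∀ σ,
      ‖f 0 (x σ) + ∑ i : Fin m, w σ i • f i.succ (x σ)‖ ≤ a + a * ‖x σ‖ := by
    intro w x hwb σ
    have hsum : ‖∑ i : Fin m, w σ i • f i.succ (x σ)‖ ≤ (m : ℝ) * (M * (c * (1 + ‖x σ‖))) := by
      refine (norm_sum_le _ _).trans ?_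
      have hterm : ∀ i : Fin m, ‖w σ i • f i.succ (x σ)‖ ≤ M * (c * (1 + ‖x σ‖)) := by
        intro i
        rw [norm_smul, Real.norm_eq_abs]
        exact mul_le_mul (hwb σ i) (hgrowth _ _) (norm_nonneg _) hM.le
      calc (∑ i : Fin m, ‖w σ i • f i.succ (x σ)‖)
          ≤ ∑ _i : Fin m, M * (c * (1 + ‖x σ‖)) := Finset.sum_le_sum fun i _ => hterm i
        _ = (m : ℝ) * (M * (c * (1 + ‖x σ‖))) := by
            simp [Finset.sum_const, nsmul_eq_mul]
    have h0 : ‖f 0 (x σ)‖ ≤ c * (1 + ‖x σ‖) := hgrowth _ _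
    have := (norm_add_le (f 0 (x σ)) (∑ i : Fin m, w σ i • f i.succ (x σ))).trans
      (add_le_add h0 hsum)
    have hx0 : (0:ℝ) ≤ ‖x σ‖ := norm_nonneg _
    rw [hadef]; nlinarith
  have hFmeas : ∀ (w : ℝ → Fin m → ℝ) (x : ℝ → EuclideanSpace ℝ (Fin n)),
      Measurable w → ContinuousOn x (Set.Icc t₀ T) →
      AEStronglyMeasurable (fun σ => f 0 (x σ) + ∑ i : Fin m, w σ i • f i.succ (x σ))
        (MeasureTheory.volume.restrict (Set.Icc t₀ T)) := by
    intro w x hw hx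
    have hx' : AEStronglyMeasurable x (MeasureTheory.volume.restrict (Set.Icc t₀ T)) :=
      hx.aestronglyMeasurable measurableSet_Icc
    refine AEStronglyMeasurable.add ((hfc 0).comp_aestronglyMeasurable hx') ?_
    refine Finset.aestronglyMeasurable_fun_sum _ fun i _ => ?_
    exact (((measurable_pi_apply i).comp hw).aestronglyMeasurable).smul
      ((hfc i.succ).comp_aestronglyMeasurable hx')
  have hFmeas' : ∀ (w : ℝ → Fin m → ℝ) (x : ℝ → EuclideanSpace ℝ (Fin n)),
      Measurable w → ContinuousOn x (Set.Icc t₀ T) → ∀ t ∈ Set.Icc t₀ T,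
      AEStronglyMeasurable (fun σ => f 0 (x σ) + ∑ i : Fin m, w σ i • f i.succ (x σ))
        (MeasureTheory.volume.restrict (Set.uIoc t₀ t)) := by
    intro w x hw hx t htm
    refine (hFmeas w x hw hx).mono_measure (Measure.restrict_mono ?_ le_rfl)
    rw [uIoc_of_le htm.1]
    exact (Set.Ioc_subset_Icc_self).trans (Set.Icc_subset_Icc le_rfl htm.2)
  have hφcont : ∀ (x : ℝ → EuclideanSpace ℝ (Fin n)), ContinuousOn x (Set.Icc t₀ T) →
      ∀ t ∈ Set.Icc t₀ T,
      IntervalIntegrable (fun σ => a + a * ‖x σ‖) MeasureTheory.volume t₀ t := by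
    intro x hx t htm
    apply ContinuousOn.intervalIntegrable
    have hsub : Set.uIcc t₀ t ⊆ Set.Icc t₀ T := by
      rw [uIcc_of_le htm.1]
      exact Set.Icc_subset_Icc le_rfl htm.2
    exact (continuousOn_const.add (continuousOn_const.mul (hx.norm))).mono hsub
  have hFint : ∀ (w : ℝ → Fin m → ℝ) (x : ℝ → EuclideanSpace ℝ (Fin n)),
      Measurable w → (∀ t i, |w t i| ≤ M) → ContinuousOn x (Set.Icc t₀ T) →
      ∀ t ∈ Set.Icc t₀ T,
      IntervalIntegrable (fun σ => f 0 (x σ) + ∑ i : Fin m, w σ i • f i.succ (x σ))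
        MeasureTheory.volume t₀ t := by
    intro w x hw hwb hx t htm
    refine (hφcont x hx t htm).mono_fun' (hFmeas' w x hw hx t htm) ?_
    exact Filter.Eventually.of_forall fun σ => by
      simpa using hFnorm w x hwb σ
  -- a priori bound on trajectories
  have hapriori : ∀ (w : ℝ → Fin m → ℝ) (x : ℝ → EuclideanSpace ℝ (Fin n)),
      Measurable w → (∀ t i, |w t i| ≤ M) → ContinuousOn x (Set.Icc t₀ T) →
      (∀ t ∈ Set.Icc t₀ T,
        x t = x₀ + ∫ σ in t₀..t, (f 0 (x σ) + ∑ i : Fin m, w σ i • f i.succ (x σ))) →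
      ∀ t ∈ Set.Icc t₀ T, ‖x t‖ ≤ B := by
    intro w x hw hwb hx heqx
    have hgb : ∀ t ∈ Set.Icc t₀ T,
        ‖x t‖ ≤ (‖x₀‖ + a * L) + a * ∫ σ in t₀..t, ‖x σ‖ := by
      intro t htm
      have h1 : ‖∫ σ in t₀..t, (f 0 (x σ) + ∑ i : Fin m, w σ i • f i.succ (x σ))‖
          ≤ |∫ σ in t₀..t, (a + a * ‖x σ‖)| := by
        refine intervalIntegral.norm_integral_le_abs_of_norm_le ?_ (hφcont x hx t htm)
        exact Filter.Eventually.of_forall fun σ => hFnorm w x hwb σ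
      have h2 : |∫ σ in t₀..t, (a + a * ‖x σ‖)| = ∫ σ in t₀..t, (a + a * ‖x σ‖) := by
        refine abs_of_nonneg (intervalIntegral.integral_nonneg htm.1 fun σ _ => by positivity)
      have hnormint : IntervalIntegrable (fun σ => a * ‖x σ‖) MeasureTheory.volume t₀ t := by
        apply ContinuousOn.intervalIntegrable
        have hsub : Set.uIcc t₀ t ⊆ Set.Icc t₀ T := by
          rw [uIcc_of_le htm.1]; exact Set.Icc_subset_Icc le_rfl htm.2
        exact (continuousOn_const.mul (hx.norm)).mono hsub
      have h3 : ∫ σ in t₀..t, (a + a * ‖x σ‖)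
          = (t - t₀) * a + a * ∫ σ in t₀..t, ‖x σ‖ := by
        rw [intervalIntegral.integral_add intervalIntegrable_const hnormint,
          intervalIntegral.integral_const, intervalIntegral.integral_const_mul]
        simp [smul_eq_mul]
      have h4 : (t - t₀) * a ≤ L * a := by
        have := htm.2; rw [hLdef]; nlinarith
      have h5 : ‖x t‖ ≤ ‖x₀‖ + ‖∫ σ in t₀..t, (f 0 (x σ) + ∑ i : Fin m, w σ i • f i.succ (x σ))‖ := by
        rw [heqx t htm]; exact norm_add_le _ _
      have h6 := h1.trans_eq (h2.trans h3)
      nlinarith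
    have := my_gronwall ht (by positivity) ha.le (hx.norm) (fun t _ => norm_nonneg _) hgb
    intro t htm
    have h := this t htm
    rw [hBdef, hLdef]
    convert h using 3 <;> rw [hLdef]
  have hBv : ∀ t ∈ Set.Icc t₀ T, ‖xv t‖ ≤ B := hapriori v xv hv hvb hxv heqv
  -- integrability of the control difference
  have hwmeas : AEStronglyMeasurable (fun σ => ‖(u σ - v σ : Fin m → ℝ)‖)
      (MeasureTheory.volume.restrict (Set.uIoc t₀ T)) :=
    ((hu.sub hv).norm).aestronglyMeasurable
  have hwb2 : ∀ σ, ‖(u σ - v σ : Fin m → ℝ)‖ ≤ 2 * M := by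
    intro σ
    refine pi_norm_le_iff_of_nonneg (by positivity) |>.2 fun i => ?_
    have h1 := hub σ i; have h2 := hvb σ i
    rw [Pi.sub_apply, Real.norm_eq_abs]
    have := abs_sub (u σ i) (v σ i)
    calc |u σ i - v σ i| ≤ |u σ i| + |v σ i| := abs_sub _ _
      _ ≤ 2 * M := by linarith
  have hwint : IntervalIntegrable (fun σ => ‖(u σ - v σ : Fin m → ℝ)‖)
      MeasureTheory.volume t₀ T := by
    refine (_root_.intervalIntegrable_const (c := 2 * M)).mono_fun' hwmeas ?_
    exact Filter.Eventually.of_forall fun σ => by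
      simpa [abs_of_nonneg (norm_nonneg _)] using hwb2 σ
  have hw2int : IntervalIntegrable (fun σ => ‖(u σ - v σ : Fin m → ℝ)‖ ^ 2)
      MeasureTheory.volume t₀ T := by
    refine (_root_.intervalIntegrable_const (c := (2 * M) ^ 2)).mono_fun' (hwmeas.pow 2) ?_
    refine Filter.Eventually.of_forall fun σ => ?_
    have h := hwb2 σ
    have h0 : (0:ℝ) ≤ ‖(u σ - v σ : Fin m → ℝ)‖ := norm_nonneg _
    show ‖‖(u σ - v σ : Fin m → ℝ)‖ ^ 2‖ ≤ (2 * M) ^ 2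
    rw [Real.norm_eq_abs, abs_of_nonneg (by positivity)]
    nlinarith
  set I := ∫ σ in t₀..T, ‖(u σ - v σ : Fin m → ℝ)‖ ^ 2 with hIdef
  have hI0 : 0 ≤ I := intervalIntegral.integral_nonneg ht fun σ _ => sq_nonneg _
  set A2 := D * ∫ σ in t₀..T, ‖(u σ - v σ : Fin m → ℝ)‖ with hA2def
  have hA2 : 0 ≤ A2 := by
    refine mul_nonneg hD0 (intervalIntegral.integral_nonneg ht fun σ _ => norm_nonneg _)
  -- pointwise bound on the difference of vector fields
  have hdiff : ∀ σ ∈ Set.Icc t₀ T,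
      ‖(f 0 (xu σ) + ∑ i : Fin m, u σ i • f i.succ (xu σ))
        - (f 0 (xv σ) + ∑ i : Fin m, v σ i • f i.succ (xv σ))‖
      ≤ K1 * ‖xu σ - xv σ‖ + D * ‖(u σ - v σ : Fin m → ℝ)‖ := by
    intro σ hσ
    have hsplit : (f 0 (xu σ) + ∑ i : Fin m, u σ i • f i.succ (xu σ))
        - (f 0 (xv σ) + ∑ i : Fin m, v σ i • f i.succ (xv σ))
        = (f 0 (xu σ) - f 0 (xv σ))
          + ∑ i : Fin m, (u σ i • f i.succ (xu σ) - v σ i • f i.succ (xv σ)) := by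
      rw [Finset.sum_sub_distrib]; abel
    rw [hsplit]
    have hterm : ∀ i : Fin m, ‖u σ i • f i.succ (xu σ) - v σ i • f i.succ (xv σ)‖
        ≤ M * (k * ‖xu σ - xv σ‖) + (c * (1 + B)) * ‖(u σ - v σ : Fin m → ℝ)‖ := by
      intro i
      have hrw : u σ i • f i.succ (xu σ) - v σ i • f i.succ (xv σ)
          = u σ i • (f i.succ (xu σ) - f i.succ (xv σ)) + (u σ i - v σ i) • f i.succ (xv σ) := by
        rw [smul_sub, sub_smul]; abel
      rw [hrw]
      refine (norm_add_le _ _).trans ?_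
      rw [norm_smul, norm_smul, Real.norm_eq_abs, Real.norm_eq_abs]
      have h1 : |u σ i| * ‖f i.succ (xu σ) - f i.succ (xv σ)‖ ≤ M * (k * ‖xu σ - xv σ‖) :=
        mul_le_mul (hub σ i) (hLip _ _ _) (norm_nonneg _) hM.le
      have h2 : |u σ i - v σ i| ≤ ‖(u σ - v σ : Fin m → ℝ)‖ := by
        have := norm_le_pi_norm (u σ - v σ) i
        simpa [Real.norm_eq_abs] using this
      have h3 : ‖f i.succ (xv σ)‖ ≤ c * (1 + B) := by
        refine (hgrowth _ _).trans ?_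
        have := hBv σ hσ
        nlinarith
      have h4 : |u σ i - v σ i| * ‖f i.succ (xv σ)‖
          ≤ ‖(u σ - v σ : Fin m → ℝ)‖ * (c * (1 + B)) :=
        mul_le_mul h2 h3 (norm_nonneg _) (norm_nonneg _)
      nlinarith
    have hsum : ‖∑ i : Fin m, (u σ i • f i.succ (xu σ) - v σ i • f i.succ (xv σ))‖
        ≤ (m : ℝ) * (M * (k * ‖xu σ - xv σ‖) + (c * (1 + B)) * ‖(u σ - v σ : Fin m → ℝ)‖) := by
      refine (norm_sum_le _ _).trans ?_
      calc (∑ i : Fin m, ‖u σ i • f i.succ (xu σ) - v σ i • f i.succ (xv σ)‖)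
          ≤ ∑ _i : Fin m, (M * (k * ‖xu σ - xv σ‖) + (c * (1 + B)) * ‖(u σ - v σ : Fin m → ℝ)‖) :=
            Finset.sum_le_sum fun i _ => hterm i
        _ = (m : ℝ) * (M * (k * ‖xu σ - xv σ‖) + (c * (1 + B)) * ‖(u σ - v σ : Fin m → ℝ)‖) := by
            simp [Finset.sum_const, nsmul_eq_mul]; ring
    have h0 : ‖f 0 (xu σ) - f 0 (xv σ)‖ ≤ k * ‖xu σ - xv σ‖ := hLip _ _ _
    refine (norm_add_le _ _).trans ?_
    rw [hK1def, hDdef]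
    nlinarith [norm_nonneg (xu σ - xv σ), norm_nonneg ((u σ - v σ : Fin m → ℝ))]
  -- Gronwall estimate for the difference
  have hgcont : ContinuousOn (fun s => ‖xu s - xv s‖) (Set.Icc t₀ T) := (hxu.sub hxv).norm
  have hgb : ∀ t ∈ Set.Icc t₀ T,
      ‖xu t - xv t‖ ≤ A2 + K1 * ∫ σ in t₀..t, ‖xu σ - xv σ‖ := by
    intro t htm
    have hFu := hFint u xu hu hub hxu t htm
    have hFv := hFint v xv hv hvb hxv t htm
    have heq2 : xu t - xv t = ∫ σ in t₀..t,
        ((f 0 (xu σ) + ∑ i : Fin m, u σ i • f i.succ (xu σ))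
          - (f 0 (xv σ) + ∑ i : Fin m, v σ i • f i.succ (xv σ))) := by
      rw [hequ t htm, heqv t htm, add_sub_add_left_eq_sub,
        intervalIntegral.integral_sub hFu hFv]
    have hgint : IntervalIntegrable (fun σ => K1 * ‖xu σ - xv σ‖) MeasureTheory.volume t₀ t := by
      apply ContinuousOn.intervalIntegrable
      have hsub : Set.uIcc t₀ t ⊆ Set.Icc t₀ T := by
        rw [uIcc_of_le htm.1]; exact Set.Icc_subset_Icc le_rfl htm.2
      exact (continuousOn_const.mul (hgcont)).mono hsub
    have hwint' : IntervalIntegrable (fun σ => D * ‖(u σ - v σ : Fin m → ℝ)‖)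
        MeasureTheory.volume t₀ t := by
      refine (hwint.const_mul D).mono_set' ?_
      rw [uIoc_of_le htm.1, uIoc_of_le ht]
      exact Set.Ioc_subset_Ioc le_rfl htm.2
    have hφint : IntervalIntegrable
        (fun σ => K1 * ‖xu σ - xv σ‖ + D * ‖(u σ - v σ : Fin m → ℝ)‖)
        MeasureTheory.volume t₀ t := hgint.add hwint'
    have h1 : ‖xu t - xv t‖ ≤ |∫ σ in t₀..t,
        (K1 * ‖xu σ - xv σ‖ + D * ‖(u σ - v σ : Fin m → ℝ)‖)| := by
      rw [heq2]
      refine intervalIntegral.norm_integral_le_abs_of_norm_le ?_ hφint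
      rw [uIoc_of_le htm.1]
      refine ae_restrict_of_forall_mem measurableSet_Ioc fun σ hσ => ?_
      exact hdiff σ ⟨hσ.1.le, hσ.2.trans htm.2⟩
    have h2 : |∫ σ in t₀..t, (K1 * ‖xu σ - xv σ‖ + D * ‖(u σ - v σ : Fin m → ℝ)‖)|
        = ∫ σ in t₀..t, (K1 * ‖xu σ - xv σ‖ + D * ‖(u σ - v σ : Fin m → ℝ)‖) :=
      abs_of_nonneg (intervalIntegral.integral_nonneg htm.1 fun σ _ => by positivity)
    have h3 : ∫ σ in t₀..t, (K1 * ‖xu σ - xv σ‖ + D * ‖(u σ - v σ : Fin m → ℝ)‖)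
        = K1 * (∫ σ in t₀..t, ‖xu σ - xv σ‖)
          + D * ∫ σ in t₀..t, ‖(u σ - v σ : Fin m → ℝ)‖ := by
      rw [intervalIntegral.integral_add hgint hwint',
        intervalIntegral.integral_const_mul, intervalIntegral.integral_const_mul]
    have h4 : ∫ σ in t₀..t, ‖(u σ - v σ : Fin m → ℝ)‖
        ≤ ∫ σ in t₀..T, ‖(u σ - v σ : Fin m → ℝ)‖ := by
      refine intervalIntegral.integral_mono_interval le_rfl htm.1 htm.2 ?_ hwint
      exact Filter.Eventually.of_forall fun σ => norm_nonneg _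
    rw [h2, h3] at h1
    rw [hA2def]
    nlinarith
  have hgron := my_gronwall ht hA2 hK1 hgcont (fun s _ => norm_nonneg _) hgb
  -- conclusion via Cauchy–Schwarz
  have hcs : ∫ σ in t₀..T, ‖(u σ - v σ : Fin m → ℝ)‖ ≤ Real.sqrt L * Real.sqrt I := by
    have := my_cs ht (fun σ => norm_nonneg _) hwint hw2int
    rw [hLdef, hIdef]
    exact this
  intro t htm
  have h := hgron t htm
  have hexp : (0:ℝ) < Real.exp (K1 * (T - t₀)) := Real.exp_pos _
  have hA2le : A2 ≤ D * (Real.sqrt L * Real.sqrt I) := by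
    rw [hA2def]
    exact mul_le_mul_of_nonneg_left hcs hD0
  have h5 : ‖xu t - xv t‖ ≤ D * (Real.sqrt L * Real.sqrt I) * Real.exp (K1 * (T - t₀)) :=
    h.trans (mul_le_mul_of_nonneg_right hA2le hexp.le)
  have hLT : K1 * (T - t₀) = K1 * L := by rw [hLdef]
  rw [hLT] at h5
  have hsI : 0 ≤ Real.sqrt I := Real.sqrt_nonneg _
  have heq3 : (D * Real.sqrt L * Real.exp (K1 * L) + 1) * Real.sqrt I
      = D * (Real.sqrt L * Real.sqrt I) * Real.exp (K1 * L) + Real.sqrt I := by ring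
  rw [heq3]
  linarith
end

section
/- Let (Ω,𝒜,μ) be a probability space and g : ℝⁿ × Ω → ℝⁿ → ℝ be measurable, bounded by M, Lipschitz in x with constant k_g (uniformly in ω), such that g(·,ω) is differentiable for each ω with ∇_x g jointly continuous in x. Then the reduced cost functional 𝒥 : L²(μ,Ω;ℝⁿ) → ℝ, 𝒥(φ) = ∫_Ω g(φ(ω),ω) dμ(ω), is Fréchet differentiable at every φ, with derivative D𝒥(φ)ψ = ∫_Ω ∇_x g(φ(ω),ω) · ψ(ω) dμ(ω); i.e., the Riesz representative of D𝒥(φ) is the function ω ↦ ∇_x g(φ(ω),ω), which belongs to L²(μ,Ω;ℝⁿ). -/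
open MeasureTheory Filter Topology Asymptotics

section aux
variable {E : Type*} [NormedAddCommGroup E] [InnerProductSpace ℝ E] [CompleteSpace E]

local notation "⟪" x ", " y "⟫" => @inner ℝ _ _ x y

lemma aux_grad_norm_le {f : E → ℝ} {G x : E} {C : ℝ} (hC : 0 ≤ C)
    (hlip : ∀ y y', |f y - f y'| ≤ C * ‖y - y'‖) (h : HasGradientAt f G x) : ‖G‖ ≤ C := by
  have h2 : ‖(InnerProductSpace.toDual ℝ E) G‖ ≤ C :=
    h.hasFDerivAt.le_of_lip' hC (Filter.Eventually.of_forall fun y => by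
      simpa [Real.norm_eq_abs] using hlip y x)
  simpa using h2

lemma aux_tendsto_dir {f : E → ℝ} {G x : E} (h : HasGradientAt f G x) (v : E) :
    Tendsto (fun k : ℕ => ((k : ℝ) + 1) * (f (x + ((k : ℝ) + 1)⁻¹ • v) - f x)) atTop
      (𝓝 ⟪G, v⟫) := by
  have hline : HasDerivAt (fun t : ℝ => x + t • v) v 0 := by
    simpa using ((hasDerivAt_id (0 : ℝ)).smul_const v).const_add x
  have hfd : HasFDerivAt f ((InnerProductSpace.toDual ℝ E) G) (x + (0 : ℝ) • v) := by
    simpa using h.hasFDerivAt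
  have hcomp : HasDerivAt (fun t : ℝ => f (x + t • v)) ⟪G, v⟫ 0 := by
    have := hfd.comp_hasDerivAt 0 hline
    simp only [InnerProductSpace.toDual_apply_apply] at this
    exact this
  have hslope := hasDerivAt_iff_tendsto_slope.mp hcomp
  have hseq : Tendsto (fun k : ℕ => ((k : ℝ) + 1)⁻¹) atTop (𝓝[≠] (0 : ℝ)) := by
    apply tendsto_nhdsWithin_of_tendsto_nhds_of_eventually_within
    · have := tendsto_one_div_add_atTop_nhds_zero_nat (𝕜 := ℝ)
      simpa [one_div] using this
    · exact Eventually.of_forall fun k => by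
        simp only [Set.mem_compl_iff, Set.mem_singleton_iff]
        positivity
  have hcompose := hslope.comp hseq
  refine hcompose.congr fun k => ?_
  have hk : ((k : ℝ) + 1) ≠ 0 := by positivity
  simp only [Function.comp_apply, slope_def_field]
  have hk' : ((k : ℝ) + 1)⁻¹ ≠ 0 := by positivity
  rw [sub_zero, zero_smul, add_zero, div_eq_iff hk']
  field_simp

lemma aux_littleo {f : E → ℝ} {G x : E} (h : HasGradientAt f G x) {ε : ℝ} (hε : 0 < ε) :
    ∃ δ > 0, ∀ v : E, ‖v‖ ≤ δ → |f (x + v) - f x - ⟪G, v⟫| ≤ ε * ‖v‖ := by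
  have h2 := hasFDerivAt_iff_isLittleO_nhds_zero.mp h.hasFDerivAt
  rw [isLittleO_iff] at h2
  have h3 := h2 hε
  rw [Metric.eventually_nhds_iff] at h3
  obtain ⟨δ, hδ, hb⟩ := h3
  refine ⟨δ / 2, by positivity, fun v hv => ?_⟩
  have hvd : dist v 0 < δ := by
    rw [dist_zero_right]; linarith
  have := hb hvd
  simpa [Real.norm_eq_abs, InnerProductSpace.toDual_apply_apply] using this

end aux

set_option maxHeartbeats 1000000 in
/-- Fréchet differentiability of the reduced cost functional
`𝒥(φ) = ∫_Ω g(φ(ω),ω) dμ` on `L²(μ,Ω;ℝⁿ)`, whose derivative has Riesz representative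
`ω ↦ ∇_x g(φ(ω),ω) ∈ L²(μ,Ω;ℝⁿ)`. -/
theorem stmt7 {n : ℕ} {Ω : Type*} [MeasurableSpace Ω] (μ : Measure Ω)
    [IsProbabilityMeasure μ]
    (g : EuclideanSpace ℝ (Fin n) → Ω → ℝ)
    (hg_meas : Measurable (Function.uncurry g))
    (M kg : ℝ) (hM : 0 < M) (hkg : 1 ≤ kg)
    (hg_bdd : ∀ x ω, |g x ω| ≤ M)
    (hg_lip : ∀ x x' ω, |g x ω - g x' ω| ≤ kg * ‖x - x'‖)
    -- `Dg x ω = ∇_x g(x,ω)`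
    (Dg : EuclideanSpace ℝ (Fin n) → Ω → EuclideanSpace ℝ (Fin n))
    (hDg : ∀ x ω, HasGradientAt (fun y => g y ω) (Dg x ω) x)
    (hDg_cont : ∀ ω, Continuous fun x => Dg x ω)
    (φ : Lp (EuclideanSpace ℝ (Fin n)) 2 μ) :
    ∃ G : Lp (EuclideanSpace ℝ (Fin n)) 2 μ,
      (∀ᵐ ω ∂μ, G ω = Dg (φ ω) ω) ∧
      HasFDerivAt (fun ψ : Lp (EuclideanSpace ℝ (Fin n)) 2 μ => ∫ ω, g (ψ ω) ω ∂μ)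
        (innerSL ℝ G) φ := by
  classical
  have hkg0 : (0 : ℝ) < kg := lt_of_lt_of_le one_pos hkg
  have hφmeas : Measurable (φ : Ω → EuclideanSpace ℝ (Fin n)) :=
    (Lp.stronglyMeasurable φ).measurable
  set D : Ω → EuclideanSpace ℝ (Fin n) := fun ω => Dg (φ ω) ω with hDdef
  have hDg_le : ∀ x ω, ‖Dg x ω‖ ≤ kg := fun x ω =>
    aux_grad_norm_le hkg0.le (fun y y' => hg_lip y y' ω) (hDg x ω)
  -- measurability of D
  have hgm : ∀ v : EuclideanSpace ℝ (Fin n), Measurable fun ω => g (φ ω + v) ω := by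
    intro v
    exact hg_meas.comp ((hφmeas.add_const v).prodMk measurable_id)
  have hgm0 : Measurable fun ω => g (φ ω) ω := by
    simpa using hgm 0
  have hDmeas : Measurable D := by
    set b := EuclideanSpace.basisFun (Fin n) ℝ with hb
    set S : ℕ → Ω → EuclideanSpace ℝ (Fin n) := fun k ω =>
      ∑ i : Fin n, (((k : ℝ) + 1) * (g (φ ω + ((k : ℝ) + 1)⁻¹ • b i) ω - g (φ ω) ω)) • b i
      with hS
    apply measurable_of_tendsto_metrizable (f := S)
    · intro k
      apply Finset.measurable_sum
      intro i _
      exact (((hgm _).sub hgm0).const_mul _).smul_const _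
    · rw [tendsto_pi_nhds]
      intro ω
      have hlim : ∀ i : Fin n,
          Tendsto (fun k : ℕ => (((k : ℝ) + 1) * (g (φ ω + ((k : ℝ) + 1)⁻¹ • b i) ω
            - g (φ ω) ω)) • b i) atTop (𝓝 ((inner (𝕜 := ℝ) (b i) (D ω)) • b i)) := by
        intro i
        have := (aux_tendsto_dir (hDg (φ ω) ω) (b i)).smul_const (b i)
        rwa [real_inner_comm] at this
      have hsum := tendsto_finset_sum Finset.univ (fun i _ => hlim i)
      rwa [b.sum_repr' (D ω)] at hsum
  have hDmem : MemLp D 2 μ :=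
    MemLp.of_bound hDmeas.aestronglyMeasurable kg
      (Eventually.of_forall fun ω => hDg_le _ _)
  refine ⟨hDmem.toLp D, hDmem.coeFn_toLp, ?_⟩
  set G := hDmem.toLp D with hGdef
  have hGD : (G : Ω → EuclideanSpace ℝ (Fin n)) =ᵐ[μ] D := hDmem.coeFn_toLp
  -- continuity of g in the first variable
  have hgc : ∀ ω, Continuous fun x : EuclideanSpace ℝ (Fin n) => g x ω := by
    intro ω
    refine (LipschitzWith.of_dist_le_mul (K := kg.toNNReal) fun a b => ?_).continuous
    rw [Real.dist_eq, dist_eq_norm, Real.coe_toNNReal _ hkg0.le]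
    exact hg_lip a b ω
  -- dense sequence in E
  set u : ℕ → EuclideanSpace ℝ (Fin n) := TopologicalSpace.denseSeq _ with hu'
  have hu : DenseRange u := TopologicalSpace.denseRange_denseSeq _
  -- remainder term
  set r : Ω → EuclideanSpace ℝ (Fin n) → ℝ := fun ω v =>
    g (φ ω + v) ω - g (φ ω) ω - inner (𝕜 := ℝ) (D ω) v with hrdef
  have hr_le : ∀ ω v, |r ω v| ≤ 2 * kg * ‖v‖ := by
    intro ω v
    have h1 : |g (φ ω + v) ω - g (φ ω) ω| ≤ kg * ‖v‖ := by
      simpa using hg_lip (φ ω + v) (φ ω) ω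
    have h2 : |inner (𝕜 := ℝ) (D ω) v| ≤ kg * ‖v‖ := by
      refine (abs_real_inner_le_norm (D ω) v).trans ?_
      exact mul_le_mul_of_nonneg_right (hDg_le (φ ω) ω) (norm_nonneg v)
    calc |r ω v| ≤ |g (φ ω + v) ω - g (φ ω) ω| + |inner (𝕜 := ℝ) (D ω) v| := abs_sub _ _
      _ ≤ kg * ‖v‖ + kg * ‖v‖ := add_le_add h1 h2
      _ = 2 * kg * ‖v‖ := by ring
  -- modulus of differentiability
  set q : ℕ → Ω → ℕ → ℝ := fun k ω j =>
    if ‖u j‖ < ((k : ℝ) + 1)⁻¹ ∧ u j ≠ 0 then |r ω (u j)| / ‖u j‖ else 0 with hqdef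
  have hq_nonneg : ∀ k ω j, 0 ≤ q k ω j := by
    intro k ω j
    simp only [hqdef]
    split <;> positivity
  have hq_le : ∀ k ω j, q k ω j ≤ 2 * kg := by
    intro k ω j
    simp only [hqdef]
    split
    · rename_i h
      rw [div_le_iff₀ (norm_pos_iff.mpr h.2)]
      exact hr_le ω (u j)
    · positivity
  have hbdd : ∀ k ω, BddAbove (Set.range (q k ω)) := by
    intro k ω
    exact ⟨2 * kg, by rintro x ⟨j, rfl⟩; exact hq_le k ω j⟩
  set m : ℕ → Ω → ℝ := fun k ω => ⨆ j, q k ω j with hmdef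
  have hm_nonneg : ∀ k ω, 0 ≤ m k ω := fun k ω =>
    (hq_nonneg k ω 0).trans (le_ciSup (hbdd k ω) 0)
  have hm_le : ∀ k ω, m k ω ≤ 2 * kg := fun k ω => ciSup_le fun j => hq_le k ω j
  have hm_meas : ∀ k, Measurable (m k) := by
    intro k
    refine Measurable.iSup fun j => ?_
    by_cases hc : ‖u j‖ < ((k : ℝ) + 1)⁻¹ ∧ u j ≠ 0
    · simp only [hqdef, if_pos hc]
      exact ((((hgm (u j)).sub hgm0).sub (hDmeas.inner measurable_const)).abs).div_const _
    · simp only [hqdef, if_neg hc]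
      exact measurable_const
  -- Claim A
  have hA : ∀ (k : ℕ) ω (v : EuclideanSpace ℝ (Fin n)), ‖v‖ < ((k : ℝ) + 1)⁻¹ →
      |r ω v| ≤ m k ω * ‖v‖ := by
    intro k ω v hv
    rcases eq_or_ne v 0 with rfl | hv0
    · simp [hrdef]
    · set c : EuclideanSpace ℝ (Fin n) → ℝ := fun w => |r ω w| / ‖w‖ with hcdef
      have hcv : c v ≤ m k ω := by
        by_contra hlt
        push_neg at hlt
        have hcont : ContinuousOn c {w : EuclideanSpace ℝ (Fin n) | w ≠ 0} := by
          apply ContinuousOn.div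
        
          · refine Continuous.continuousOn ?_
            refine Continuous.abs ?_
            exact (((hgc ω).comp (continuous_const.add continuous_id)).sub continuous_const).sub
              (continuous_const.inner continuous_id)
          · exact continuous_norm.continuousOn
          · intro w hw
            exact norm_ne_zero_iff.mpr hw
        have hopen1 : IsOpen ({w : EuclideanSpace ℝ (Fin n) | w ≠ 0} ∩ c ⁻¹' Set.Ioi (m k ω)) :=
          hcont.isOpen_inter_preimage isOpen_ne isOpen_Ioi
        have hopen : IsOpen (({w : EuclideanSpace ℝ (Fin n) | w ≠ 0} ∩ c ⁻¹' Set.Ioi (m k ω)) ∩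
            {w : EuclideanSpace ℝ (Fin n) | ‖w‖ < ((k : ℝ) + 1)⁻¹}) :=
          hopen1.inter (isOpen_lt continuous_norm continuous_const)
        obtain ⟨j, hj⟩ := hu.exists_mem_open hopen ⟨v, ⟨⟨hv0, hlt⟩, hv⟩⟩
        have h1 : q k ω j ≤ m k ω := le_ciSup (hbdd k ω) j
        have h2 : q k ω j = c (u j) := by
          simp only [hqdef, hcdef]
          rw [if_pos]
          exact ⟨hj.2, hj.1.1⟩
        rw [h2] at h1
        exact absurd h1 (not_le.mpr hj.1.2)
      have hvpos : (0 : ℝ) < ‖v‖ := norm_pos_iff.mpr hv0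
      calc |r ω v| = c v * ‖v‖ := by rw [hcdef]; field_simp
        _ ≤ m k ω * ‖v‖ := mul_le_mul_of_nonneg_right hcv hvpos.le
  -- Claim B
  have hB : ∀ ω, Tendsto (fun k => m k ω) atTop (𝓝 0) := by
    intro ω
    rw [Metric.tendsto_atTop]
    intro ε' hε'
    obtain ⟨δ, hδ, hδb⟩ := aux_littleo (hDg (φ ω) ω) (half_pos hε')
    obtain ⟨N, hN⟩ := exists_nat_gt δ⁻¹
    refine ⟨N, fun k hk => ?_⟩
    have hkk : ((k : ℝ) + 1)⁻¹ ≤ δ := by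
      rw [inv_le_comm₀ (by positivity) hδ]
      calc δ⁻¹ ≤ (N : ℝ) := hN.le
        _ ≤ (k : ℝ) + 1 := by
          have : (N : ℝ) ≤ (k : ℝ) := Nat.cast_le.mpr hk
          linarith
    have hmb : m k ω ≤ ε' / 2 := by
      refine ciSup_le fun j => ?_
      by_cases hc : ‖u j‖ < ((k : ℝ) + 1)⁻¹ ∧ u j ≠ 0
      · have hub := hδb (u j) (le_trans hc.1.le hkk)
        simp only [hqdef, if_pos hc]
        rw [div_le_iff₀ (norm_pos_iff.mpr hc.2)]
        exact hub
      · simp only [hqdef, if_neg hc]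
        positivity
    rw [dist_zero_right, Real.norm_eq_abs, abs_of_nonneg (hm_nonneg k ω)]
    exact lt_of_le_of_lt hmb (by linarith)
  -- dominated convergence for ∫ (m k)^2
  have htend : Tendsto (fun k => ∫ ω, (m k ω) ^ 2 ∂μ) atTop (𝓝 0) := by
    have h0 : (0 : ℝ) = ∫ (_ : Ω), (0 : ℝ) ∂μ := by simp
    rw [h0]
    apply tendsto_integral_of_dominated_convergence (bound := fun _ => (2 * kg) ^ 2)
    · intro k
      exact ((hm_meas k).pow_const 2).aestronglyMeasurable
    · exact integrable_const _
    · intro k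
      refine Eventually.of_forall fun ω => ?_
      rw [Real.norm_eq_abs, abs_of_nonneg (by positivity)]
      exact pow_le_pow_left₀ (hm_nonneg k ω) (hm_le k ω) 2
    · refine Eventually.of_forall fun ω => ?_
      have := (hB ω).mul (hB ω)
      simpa [pow_two] using this
  -- key quantitative estimate
  have hkey : ∀ ε > (0 : ℝ), ∃ δ > (0 : ℝ), ∀ ψ : Lp (EuclideanSpace ℝ (Fin n)) 2 μ,
      ‖ψ - φ‖ ≤ δ →
      |(∫ ω, g (ψ ω) ω ∂μ) - (∫ ω, g (φ ω) ω ∂μ) - inner (𝕜 := ℝ) G (ψ - φ)| ≤ ε * ‖ψ - φ‖ := by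
    intro ε hε
    obtain ⟨K, hK⟩ := (Metric.tendsto_atTop.mp htend) ((ε / 2) ^ 2) (by positivity)
    have hIK : ∫ ω, (m K ω) ^ 2 ∂μ ≤ (ε / 2) ^ 2 := by
      have := hK K le_rfl
      rw [dist_zero_right, Real.norm_eq_abs] at this
      calc ∫ ω, (m K ω) ^ 2 ∂μ ≤ |∫ ω, (m K ω) ^ 2 ∂μ| := le_abs_self _
        _ ≤ (ε / 2) ^ 2 := this.le
    set C : ℝ := 2 * kg * ((K : ℝ) + 1) with hCdef
    have hC0 : 0 < C := by positivity
    refine ⟨ε / (2 * C), by positivity, fun ψ hψ => ?_⟩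
    set d : Lp (EuclideanSpace ℝ (Fin n)) 2 μ := ψ - φ with hddef
    have hdmeas : Measurable (d : Ω → EuclideanSpace ℝ (Fin n)) :=
      (Lp.stronglyMeasurable d).measurable
    have hψeq : ∀ᵐ ω ∂μ, ψ ω = φ ω + d ω := by
      filter_upwards [Lp.coeFn_sub ψ φ] with ω h
      rw [show (d : Ω → EuclideanSpace ℝ (Fin n)) ω = ((ψ : Ω → EuclideanSpace ℝ (Fin n))
        - (φ : Ω → EuclideanSpace ℝ (Fin n))) ω from h, Pi.sub_apply]
      abel
    -- integrability facts
    have hIfun : ∀ h : Ω → EuclideanSpace ℝ (Fin n), Measurable h →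
        Integrable (fun ω => g (h ω) ω) μ := by
      intro h hh
      have hm' : AEStronglyMeasurable (fun ω => g (h ω) ω) μ :=
        (hg_meas.comp (hh.prodMk measurable_id)).aestronglyMeasurable
      exact memLp_one_iff_integrable.mp (MemLp.of_bound hm' M
        (Eventually.of_forall fun ω => by
          simpa [Real.norm_eq_abs] using hg_bdd (h ω) ω))
    have hIg1 : Integrable (fun ω => g (φ ω + d ω) ω) μ := hIfun _ (hφmeas.add hdmeas)
    have hIg0 : Integrable (fun ω => g (φ ω) ω) μ := hIfun _ hφmeas
    have hIinner : Integrable (fun ω => inner (𝕜 := ℝ) (D ω) (d ω)) μ := by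
      refine (L2.integrable_inner (𝕜 := ℝ) G d).congr ?_
      filter_upwards [hGD] with ω h
      rw [h]
    have hIsub : Integrable (fun ω => g (φ ω + d ω) ω - g (φ ω) ω) μ := hIg1.sub hIg0
    have hIR : Integrable (fun ω => r ω (d ω)) μ := hIsub.sub hIinner
    -- identity
    have hint1 : ∫ ω, g (ψ ω) ω ∂μ = ∫ ω, g (φ ω + d ω) ω ∂μ :=
      integral_congr_ae (by filter_upwards [hψeq] with ω h; rw [h])
    have hinner : inner (𝕜 := ℝ) G d = ∫ ω, inner (𝕜 := ℝ) (D ω) (d ω) ∂μ := by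
      rw [L2.inner_def]
      exact integral_congr_ae (by filter_upwards [hGD] with ω h; rw [h])
    have hsplit : (∫ ω, g (ψ ω) ω ∂μ) - (∫ ω, g (φ ω) ω ∂μ) - inner (𝕜 := ℝ) G d
        = ∫ ω, r ω (d ω) ∂μ := by
      rw [hint1, hinner]
      rw [show (fun ω => r ω ((d : Ω → EuclideanSpace ℝ (Fin n)) ω))
        = fun ω => (g (φ ω + d ω) ω - g (φ ω) ω) - inner (𝕜 := ℝ) (D ω) (d ω) from rfl,
        integral_sub hIsub hIinner, integral_sub hIg1 hIg0]
    -- pointwise bound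
    have hpt : ∀ ω, |r ω (d ω)| ≤ m K ω * ‖d ω‖ + C * ‖d ω‖ ^ 2 := by
      intro ω
      by_cases hsmall : ‖d ω‖ < ((K : ℝ) + 1)⁻¹
      · have h1 := hA K ω (d ω) hsmall
        have h2 : 0 ≤ C * ‖d ω‖ ^ 2 := by positivity
        linarith
      · push_neg at hsmall
        have h1 := hr_le ω (d ω)
        have h2 : (1 : ℝ) ≤ ((K : ℝ) + 1) * ‖d ω‖ := by
          have hKpos : (0 : ℝ) < (K : ℝ) + 1 := by positivity
          calc (1 : ℝ) = ((K : ℝ) + 1) * ((K : ℝ) + 1)⁻¹ := by field_simp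
            _ ≤ ((K : ℝ) + 1) * ‖d ω‖ := mul_le_mul_of_nonneg_left hsmall hKpos.le
        have h3 : 0 ≤ m K ω * ‖d ω‖ := mul_nonneg (hm_nonneg K ω) (norm_nonneg _)
        have h4 : 2 * kg * ‖d ω‖ ≤ C * ‖d ω‖ ^ 2 := by
          rw [hCdef]
          have h5 := mul_le_mul_of_nonneg_left h2
            (mul_nonneg (by positivity : (0:ℝ) ≤ 2 * kg) (norm_nonneg (d ω)))
          nlinarith [h5]
        linarith
    -- integrable majorants
    have hnd : Integrable (fun ω => ‖d ω‖) μ := ((Lp.memLp d).integrable one_le_two).norm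
    have hImk : Integrable (fun ω => m K ω * ‖d ω‖) μ := by
      refine Integrable.mono (hnd.const_mul (2 * kg))
        ((hm_meas K).mul hdmeas.norm).aestronglyMeasurable ?_
      refine Eventually.of_forall fun ω => ?_
      rw [Real.norm_eq_abs, Real.norm_eq_abs,
        abs_of_nonneg (mul_nonneg (hm_nonneg K ω) (norm_nonneg _)),
        abs_of_nonneg (by positivity)]
      exact mul_le_mul_of_nonneg_right (hm_le K ω) (norm_nonneg _)
    have hInd2 : Integrable (fun ω => ‖d ω‖ ^ 2) μ := by
      refine (L2.integrable_inner (𝕜 := ℝ) d d).congr ?_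
      exact Eventually.of_forall fun ω => real_inner_self_eq_norm_sq (d ω)
    have hnormd : ∫ ω, ‖d ω‖ ^ 2 ∂μ = ‖d‖ ^ 2 := by
      have h1 : inner (𝕜 := ℝ) d d = ∫ ω, inner (𝕜 := ℝ) (d ω) (d ω) ∂μ := L2.inner_def d d
      have h2 : inner (𝕜 := ℝ) d d = ‖d‖ ^ 2 := real_inner_self_eq_norm_sq d
      rw [← h2, h1]
      exact integral_congr_ae (Eventually.of_forall fun ω =>
        (real_inner_self_eq_norm_sq (d ω)).symm)
    -- Cauchy-Schwarz
    have hhalf : ∀ a : ℝ, 0 ≤ a → ((a ^ 2 : ℝ)) ^ ((1 : ℝ) / 2) = a := by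
      intro a ha
      rw [← Real.rpow_natCast a 2, ← Real.rpow_mul ha]
      norm_num
    have hCS : ∫ ω, m K ω * ‖d ω‖ ∂μ ≤ (ε / 2) * ‖d‖ := by
      have hpq : Real.HolderConjugate 2 2 := Real.HolderConjugate.two_two
      have hof : ENNReal.ofReal (2 : ℝ) = 2 := by
        rw [show (2 : ℝ) = ((2 : ℕ) : ℝ) by norm_num, ENNReal.ofReal_natCast]
        norm_num
      have hmK2 : MemLp (m K) (ENNReal.ofReal 2) μ := by
        rw [hof]
        exact MemLp.of_bound (hm_meas K).aestronglyMeasurable (2 * kg)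
          (Eventually.of_forall fun ω => by
            rw [Real.norm_eq_abs, abs_of_nonneg (hm_nonneg K ω)]; exact hm_le K ω)
      have hd2 : MemLp (fun ω => ‖d ω‖) (ENNReal.ofReal 2) μ := by
        rw [hof]; exact (Lp.memLp d).norm
      have hcs := integral_mul_le_Lp_mul_Lq_of_nonneg hpq
        (Eventually.of_forall (hm_nonneg K))
        (Eventually.of_forall fun ω => norm_nonneg (d ω)) hmK2 hd2
      have e1 : ∫ ω, m K ω ^ (2 : ℝ) ∂μ = ∫ ω, (m K ω) ^ 2 ∂μ := by
        refine integral_congr_ae (Eventually.of_forall fun ω => ?_)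
        show m K ω ^ (2 : ℝ) = (m K ω) ^ 2
        rw [show (2 : ℝ) = ((2 : ℕ) : ℝ) by norm_num, Real.rpow_natCast]
      have e2 : ∫ ω, ‖d ω‖ ^ (2 : ℝ) ∂μ = ‖d‖ ^ 2 := by
        rw [← hnormd]
        refine integral_congr_ae (Eventually.of_forall fun ω => ?_)
        show ‖(d : Ω → EuclideanSpace ℝ (Fin n)) ω‖ ^ (2 : ℝ)
          = ‖(d : Ω → EuclideanSpace ℝ (Fin n)) ω‖ ^ 2
        rw [show (2 : ℝ) = ((2 : ℕ) : ℝ) by norm_num, Real.rpow_natCast]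
      rw [e1, e2] at hcs
      have hb1 : (∫ ω, (m K ω) ^ 2 ∂μ) ^ ((1 : ℝ) / 2) ≤ ε / 2 := by
        calc (∫ ω, (m K ω) ^ 2 ∂μ) ^ ((1 : ℝ) / 2)
            ≤ ((ε / 2) ^ 2) ^ ((1 : ℝ) / 2) :=
              Real.rpow_le_rpow (integral_nonneg fun ω => sq_nonneg _) hIK (by norm_num)
          _ = ε / 2 := hhalf _ (by positivity)
      have hb2 : (‖d‖ ^ 2 : ℝ) ^ ((1 : ℝ) / 2) = ‖d‖ := hhalf _ (norm_nonneg d)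
      calc ∫ ω, m K ω * ‖d ω‖ ∂μ
          ≤ (∫ ω, (m K ω) ^ 2 ∂μ) ^ ((1 : ℝ) / 2) * (‖d‖ ^ 2 : ℝ) ^ ((1 : ℝ) / 2) := hcs
        _ ≤ (ε / 2) * ‖d‖ := by
            rw [hb2]
            exact mul_le_mul_of_nonneg_right hb1 (norm_nonneg d)
    -- assemble
    have hfinal : |∫ ω, r ω (d ω) ∂μ| ≤ ε * ‖d‖ := by
      have habs : |∫ ω, r ω (d ω) ∂μ| ≤ ∫ ω, |r ω (d ω)| ∂μ := by
        simpa [Real.norm_eq_abs] using norm_integral_le_integral_norm (fun ω => r ω (d ω))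
      have hmono : ∫ ω, |r ω (d ω)| ∂μ ≤ ∫ ω, (m K ω * ‖d ω‖ + C * ‖d ω‖ ^ 2) ∂μ :=
        integral_mono hIR.abs (hImk.add (hInd2.const_mul C)) hpt
      have hadd : ∫ ω, (m K ω * ‖d ω‖ + C * ‖d ω‖ ^ 2) ∂μ
          = (∫ ω, m K ω * ‖d ω‖ ∂μ) + C * ∫ ω, ‖d ω‖ ^ 2 ∂μ := by
        rw [integral_add hImk (hInd2.const_mul C), integral_const_mul]
      have hlast : C * ∫ ω, ‖d ω‖ ^ 2 ∂μ ≤ (ε / 2) * ‖d‖ := by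
        rw [hnormd]
        have hCne : C ≠ 0 := ne_of_gt hC0
        calc C * ‖d‖ ^ 2 = (C * ‖d‖) * ‖d‖ := by ring
          _ ≤ (C * ‖d‖) * (ε / (2 * C)) :=
              mul_le_mul_of_nonneg_left hψ (by positivity)
          _ = (ε / 2) * ‖d‖ := by field_simp
      calc |∫ ω, r ω (d ω) ∂μ| ≤ ∫ ω, |r ω (d ω)| ∂μ := habs
        _ ≤ (∫ ω, m K ω * ‖d ω‖ ∂μ) + C * ∫ ω, ‖d ω‖ ^ 2 ∂μ := by rw [← hadd]; exact hmono
        _ ≤ (ε / 2) * ‖d‖ + (ε / 2) * ‖d‖ := add_le_add hCS hlast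
        _ = ε * ‖d‖ := by ring
    rw [hsplit]
    exact hfinal
  -- conclude
  rw [hasFDerivAt_iff_isLittleO_nhds_zero, isLittleO_iff]
  intro c hc
  obtain ⟨δ, hδ, hb⟩ := hkey c hc
  rw [Metric.eventually_nhds_iff]
  refine ⟨δ, hδ, fun h hh => ?_⟩
  have h1 : ‖(φ + h) - φ‖ ≤ δ := by
    rw [add_sub_cancel_left]
    rw [dist_zero_right] at hh
    exact hh.le
  have h2 := hb (φ + h) h1
  rw [add_sub_cancel_left] at h2
  simpa [Real.norm_eq_abs] using h2
end

section
/- Let f₀,…,f_m : ℝⁿ → ℝⁿ be globally Lipschitz with linear growth, let U ⊂ ℝᵐ be compact and convex, and suppose u_k ⇀* ū in L^∞(0,T;ℝᵐ) with u_k(t), ū(t) ∈ U a.e., and the trajectories x_k solving x_k(t) = x₀ + ∫₀ᵗ [f₀(x_k) + Σᵢ fᵢ(x_k)(u_k)ᵢ] dσ converge uniformly on [0,T] to a function x̄. Then x̄ solves x̄(t) = x₀ + ∫₀ᵗ [f₀(x̄) + Σᵢ fᵢ(x̄)ūᵢ] dσ, i.e., the limit trajectory is the trajectory associated with the weak-*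 limit control. -/
open MeasureTheory intervalIntegral Filter Set

lemma aux_coord {n : ℕ} (v : EuclideanSpace ℝ (Fin n)) (l : Fin n) : |v l| ≤ ‖v‖ := by
  rw [EuclideanSpace.norm_eq, ← Real.sqrt_sq_eq_abs (v l)]
  apply Real.sqrt_le_sqrt
  have := Finset.single_le_sum (f := fun i => ‖v i‖ ^ 2) (fun i _ => sq_nonneg _)
    (Finset.mem_univ l)
  simpa [Real.norm_eq_abs, sq_abs] using this

lemma aux_II {E : Type*} [NormedAddCommGroup E] [NormedSpace ℝ E]
    {a : ℝ → ℝ} {g : ℝ → E} {t T Ca : ℝ} (ht0 : 0 ≤ t) (htT : t ≤ T)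
    (ha : Measurable a) (hab : ∀ᵐ σ ∂(volume.restrict (Set.Ioc 0 t)), |a σ| ≤ Ca)
    (hg : ContinuousOn g (Set.Icc 0 T)) :
    IntervalIntegrable (fun σ => a σ • g σ) volume 0 t := by
  have hsub : Set.Ioc 0 t ⊆ Set.Icc 0 T := fun σ hσ => ⟨hσ.1.le, hσ.2.trans htT⟩
  obtain ⟨Cg, hCg⟩ := (isCompact_Icc (a := (0:ℝ)) (b := T)).exists_bound_of_continuousOn hg
  rw [intervalIntegrable_iff_integrableOn_Ioc_of_le ht0]
  refine ⟨AEStronglyMeasurable.smul ha.aestronglyMeasurable.restrict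
    ((hg.mono hsub).aestronglyMeasurable measurableSet_Ioc), ?_⟩
  apply HasFiniteIntegral.restrict_of_bounded (C := |Ca| * |Cg|)
    (measure_Ioc_lt_top)
  filter_upwards [hab, ae_restrict_mem measurableSet_Ioc] with σ h1 h2
  rw [norm_smul, Real.norm_eq_abs]
  have := (hCg σ (hsub h2)).trans (le_abs_self Cg)
  have h1' := h1.trans (le_abs_self Ca)
  exact mul_le_mul h1' this (norm_nonneg _) (abs_nonneg _)

lemma aux_IIsum {E : Type*} [NormedAddCommGroup E] {μ : MeasureTheory.Measure ℝ} {a b : ℝ}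
    {ι : Type*} (s : Finset ι) {g : ι → ℝ → E}
    (h : ∀ i ∈ s, IntervalIntegrable (g i) μ a b) :
    IntervalIntegrable (fun σ => ∑ i ∈ s, g i σ) μ a b := by
  have e : (∑ i ∈ s, g i) = fun σ => ∑ i ∈ s, g i σ := by funext σ; simp
  have h2 := IntervalIntegrable.sum s h
  rwa [e] at h2

lemma aux_ind {m : ℕ} {t T : ℝ} (ht0 : 0 ≤ t) (htT : t ≤ T)
    (w : ℝ → Fin m → ℝ) (ψ : ℝ → Fin m → ℝ) :
    (∫ σ in Set.Icc 0 T, ∑ i : Fin m,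
        w σ i * Set.indicator (Set.Ioc 0 t) (fun τ => ψ τ i) σ ∂volume)
      = ∫ σ in (0:ℝ)..t, ∑ i : Fin m, w σ i * ψ σ i := by
  have hsub : Set.Ioc 0 t ⊆ Set.Icc 0 T := fun σ hσ => ⟨hσ.1.le, hσ.2.trans htT⟩
  have h1 : ∀ σ, (∑ i : Fin m, w σ i * Set.indicator (Set.Ioc 0 t) (fun τ => ψ τ i) σ)
      = Set.indicator (Set.Ioc 0 t) (fun τ => ∑ i : Fin m, w τ i * ψ τ i) σ := by
    intro σ
    by_cases h : σ ∈ Set.Ioc 0 t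
    · simp [Set.indicator_of_mem h]
    · simp [Set.indicator_of_notMem h]
  simp_rw [h1]
  rw [MeasureTheory.integral_indicator measurableSet_Ioc,
    Measure.restrict_restrict measurableSet_Ioc, Set.inter_eq_left.2 hsub,
    intervalIntegral.integral_of_le ht0]

set_option maxHeartbeats 1000000 in
/-- for control-affine dynamics, if `u_k ⇀* ū` in `L^∞(0,T;ℝᵐ)` and the
trajectories `x_k` converge uniformly to `x̄`, then `x̄` is the trajectory associated
with `ū`. -/
theorem stmt10 {n m : ℕ}
    (f : Fin (m + 1) → EuclideanSpace ℝ (Fin n) → EuclideanSpace ℝ (Fin n))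
    (k c : ℝ) (hk : 0 < k) (hc : 0 < c)
    (hLip : ∀ i x x', ‖f i x - f i x'‖ ≤ k * ‖x - x'‖)
    (hgrowth : ∀ i x, ‖f i x‖ ≤ c * (1 + ‖x‖))
    (T : ℝ) (hT : 0 < T)
    (U : Set (Fin m → ℝ)) (hU_comp : IsCompact U) (hU_conv : Convex ℝ U)
    (u : ℕ → ℝ → Fin m → ℝ) (ubar : ℝ → Fin m → ℝ)
    (hu_meas : ∀ j, Measurable (u j)) (hubar_meas : Measurable ubar)
    (hu_mem : ∀ j, ∀ᵐ t ∂(volume.restrict (Set.Icc 0 T)), u j t ∈ U)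
    (hubar_mem : ∀ᵐ t ∂(volume.restrict (Set.Icc 0 T)), ubar t ∈ U)
    -- weak-* convergence `u_k ⇀* ū` in `L^∞ = (L¹)*`
    (hweak : ∀ ψ : ℝ → Fin m → ℝ,
      Integrable ψ (volume.restrict (Set.Icc 0 T)) →
      Tendsto (fun j => ∫ t in Set.Icc 0 T, ∑ i : Fin m, u j t i * ψ t i ∂volume)
        atTop (nhds (∫ t in Set.Icc 0 T, ∑ i : Fin m, ubar t i * ψ t i ∂volume)))
    (x₀ : EuclideanSpace ℝ (Fin n))
    (x : ℕ → ℝ → EuclideanSpace ℝ (Fin n)) (xbar : ℝ → EuclideanSpace ℝ (Fin n))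
    (hxc : ∀ j, ContinuousOn (x j) (Set.Icc 0 T))
    (heq : ∀ j, ∀ t ∈ Set.Icc 0 T,
      x j t = x₀ + ∫ σ in (0:ℝ)..t, (f 0 (x j σ) + ∑ i : Fin m, u j σ i • f i.succ (x j σ)))
    (hunif : TendstoUniformlyOn x xbar atTop (Set.Icc 0 T)) :
    ∀ t ∈ Set.Icc 0 T,
      xbar t = x₀ + ∫ σ in (0:ℝ)..t,
        (f 0 (xbar σ) + ∑ i : Fin m, ubar σ i • f i.succ (xbar σ)) := by
  -- continuity of the fields
  have hfc : ∀ i, Continuous (f i) := by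
    intro i
    refine (LipschitzWith.of_dist_le_mul (K := ⟨k, hk.le⟩) ?_).continuous
    intro a b
    have h := hLip i a b
    rw [← dist_eq_norm, ← dist_eq_norm] at h
    exact h
  have hxbarc : ContinuousOn xbar (Set.Icc 0 T) :=
    hunif.continuousOn (Eventually.of_forall hxc).frequently
  obtain ⟨M₀, hM₀⟩ := isBounded_iff_forall_norm_le.1 hU_comp.isBounded
  set M := |M₀| with hMdef
  have hM : ∀ v ∈ U, ‖v‖ ≤ M := fun v hv => (hM₀ v hv).trans (le_abs_self _)
  have hMnn : 0 ≤ M := abs_nonneg _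
  intro t ht
  obtain ⟨ht0, htT⟩ := ht
  have hsub : Set.Ioc 0 t ⊆ Set.Icc 0 T := fun σ hσ => ⟨hσ.1.le, hσ.2.trans htT⟩
  have hIccsub : Set.Icc 0 t ⊆ Set.Icc 0 T := Set.Icc_subset_Icc le_rfl htT
  -- a.e. membership facts transported
  have hu_ae : ∀ j, ∀ᵐ σ ∂(volume.restrict (Set.Ioc 0 t)), u j σ ∈ U := by
    intro j
    have h := (ae_restrict_iff' measurableSet_Icc).1 (hu_mem j)
    filter_upwards [ae_restrict_of_ae h, ae_restrict_mem measurableSet_Ioc] with σ h1 h2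
    exact h1 (hsub h2)
  have hubar_ae : ∀ᵐ σ ∂(volume.restrict (Set.Ioc 0 t)), ubar σ ∈ U := by
    have h := (ae_restrict_iff' measurableSet_Icc).1 hubar_mem
    filter_upwards [ae_restrict_of_ae h, ae_restrict_mem measurableSet_Ioc] with σ h1 h2
    exact h1 (hsub h2)
  have humeas : ∀ j i, Measurable (fun σ => u j σ i) :=
    fun j i => (measurable_pi_apply i).comp (hu_meas j)
  have hubarmeas : ∀ i, Measurable (fun σ => ubar σ i) :=
    fun i => (measurable_pi_apply i).comp hubar_meas
  have hu_bd : ∀ j i, ∀ᵐ σ ∂(volume.restrict (Set.Ioc 0 t)), |u j σ i| ≤ M := by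
    intro j i
    filter_upwards [hu_ae j] with σ hσ
    exact le_trans (by simpa using norm_le_pi_norm (u j σ) i) (hM _ hσ)
  have hubar_bd : ∀ i, ∀ᵐ σ ∂(volume.restrict (Set.Ioc 0 t)), |ubar σ i| ≤ M := by
    intro i
    filter_upwards [hubar_ae] with σ hσ
    exact le_trans (by simpa using norm_le_pi_norm (ubar σ) i) (hM _ hσ)
  -- integrability facts
  have hcf : ∀ (i : Fin (m+1)) (y : ℝ → EuclideanSpace ℝ (Fin n)),
      ContinuousOn y (Set.Icc 0 T) → ContinuousOn (fun σ => f i (y σ)) (Set.Icc 0 T) :=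
    fun i y hy => (hfc i).comp_continuousOn hy
  have hI0 : ∀ j, IntervalIntegrable (fun σ => f 0 (x j σ)) volume 0 t := by
    intro j
    apply ContinuousOn.intervalIntegrable
    rw [Set.uIcc_of_le ht0]
    exact (hcf 0 _ (hxc j)).mono hIccsub
  have hI0bar : IntervalIntegrable (fun σ => f 0 (xbar σ)) volume 0 t := by
    apply ContinuousOn.intervalIntegrable
    rw [Set.uIcc_of_le ht0]
    exact (hcf 0 _ hxbarc).mono hIccsub
  have hIu : ∀ j (i : Fin m),
      IntervalIntegrable (fun σ => u j σ i • f i.succ (x j σ)) volume 0 t :=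
    fun j i => aux_II ht0 htT (humeas j i) (hu_bd j i) (hcf i.succ _ (hxc j))
  have hIubar : ∀ (i : Fin m),
      IntervalIntegrable (fun σ => ubar σ i • f i.succ (xbar σ)) volume 0 t :=
    fun i => aux_II ht0 htT (hubarmeas i) (hubar_bd i) (hcf i.succ _ hxbarc)
  have hIumix : ∀ j (i : Fin m),
      IntervalIntegrable (fun σ => u j σ i • f i.succ (xbar σ)) volume 0 t :=
    fun j i => aux_II ht0 htT (humeas j i) (hu_bd j i) (hcf i.succ _ hxbarc)
  have hIsum : ∀ (g : Fin m → ℝ → EuclideanSpace ℝ (Fin n)),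
      (∀ i, IntervalIntegrable (g i) volume 0 t) →
      IntervalIntegrable (fun σ => ∑ i : Fin m, g i σ) volume 0 t := by
    intro g hg
    have e : (∑ i : Fin m, g i) = fun σ => ∑ i : Fin m, g i σ := by
      funext σ; simp
    have h := IntervalIntegrable.sum (μ := volume) (a := (0:ℝ)) (b := t)
      (f := g) Finset.univ (fun i _ => hg i)
    rwa [e] at h
  have hIg : ∀ j, IntervalIntegrable
      (fun σ => f 0 (x j σ) + ∑ i : Fin m, u j σ i • f i.succ (x j σ)) volume 0 t :=
    fun j => (hI0 j).add (hIsum _ fun i => hIu j i)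
  have hIgbar : IntervalIntegrable
      (fun σ => f 0 (xbar σ) + ∑ i : Fin m, ubar σ i • f i.succ (xbar σ)) volume 0 t :=
    hI0bar.add (hIsum _ fun i => hIubar i)
  -- the two pieces
  set D : ℕ → EuclideanSpace ℝ (Fin n) := fun j => ∫ σ in (0:ℝ)..t,
    (f 0 (x j σ) - f 0 (xbar σ)
      + ∑ i : Fin m, u j σ i • (f i.succ (x j σ) - f i.succ (xbar σ))) with hDdef
  set C : ℕ → EuclideanSpace ℝ (Fin n) := fun j => ∫ σ in (0:ℝ)..t,
    (∑ i : Fin m, (u j σ i - ubar σ i) • f i.succ (xbar σ)) with hCdef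
  have hIDterm : ∀ j, IntervalIntegrable (fun σ => f 0 (x j σ) - f 0 (xbar σ)
      + ∑ i : Fin m, u j σ i • (f i.succ (x j σ) - f i.succ (xbar σ))) volume 0 t := by
    intro j
    refine ((hI0 j).sub hI0bar).add (hIsum _ fun i => ?_)
    have := (hIu j i).sub (hIumix j i)
    simpa [smul_sub] using this
  have hICterm : ∀ j, IntervalIntegrable
      (fun σ => ∑ i : Fin m, (u j σ i - ubar σ i) • f i.succ (xbar σ)) volume 0 t := by
    intro j
    refine hIsum _ fun i => ?_
    have := (hIumix j i).sub (hIubar i)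
    simpa [sub_smul] using this
  -- the splitting identity
  have hsplit : ∀ j, (∫ σ in (0:ℝ)..t,
      (f 0 (x j σ) + ∑ i : Fin m, u j σ i • f i.succ (x j σ)))
      = D j + C j + ∫ σ in (0:ℝ)..t,
        (f 0 (xbar σ) + ∑ i : Fin m, ubar σ i • f i.succ (xbar σ)) := by
    intro j
    rw [hDdef, hCdef]
    rw [← intervalIntegral.integral_add (hIDterm j) (hICterm j),
      ← intervalIntegral.integral_add ((hIDterm j).add (hICterm j)) hIgbar]
    apply intervalIntegral.integral_congr
    intro σ _
    simp only [smul_sub, sub_smul, Finset.sum_sub_distrib]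
    abel
  -- D tends to zero
  have hD0 : Tendsto D atTop (nhds 0) := by
    rw [NormedAddCommGroup.tendsto_nhds_zero]
    intro ε hε
    have hK : (0:ℝ) < k * (1 + (m:ℝ) * M) := by positivity
    have hδpos : (0:ℝ) < ε / (k * (1 + (m:ℝ) * M) * (T + 1)) := by positivity
    set δ := ε / (k * (1 + (m:ℝ) * M) * (T + 1)) with hδdef
    filter_upwards [Metric.tendstoUniformlyOn_iff.1 hunif δ hδpos] with j hj
    have hbd : ∀ᵐ σ ∂(volume : Measure ℝ), σ ∈ Set.uIoc 0 t →
        ‖f 0 (x j σ) - f 0 (xbar σ)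
          + ∑ i : Fin m, u j σ i • (f i.succ (x j σ) - f i.succ (xbar σ))‖
          ≤ k * (1 + (m:ℝ) * M) * δ := by
      have h := (ae_restrict_iff' measurableSet_Icc).1 (hu_mem j)
      filter_upwards [h] with σ hσU hσ
      rw [Set.uIoc_of_le ht0] at hσ
      have hσT : σ ∈ Set.Icc 0 T := hsub hσ
      have hd : ‖x j σ - xbar σ‖ ≤ δ := by
        have h2 := hj σ hσT
        rw [dist_comm, dist_eq_norm] at h2
        exact h2.le
      have h0 : ‖f 0 (x j σ) - f 0 (xbar σ)‖ ≤ k * δ :=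
        (hLip 0 _ _).trans (by nlinarith)
      have hi : ∀ i : Fin m,
          ‖u j σ i • (f i.succ (x j σ) - f i.succ (xbar σ))‖ ≤ M * (k * δ) := by
        intro i
        rw [norm_smul, Real.norm_eq_abs]
        have h1 : |u j σ i| ≤ M :=
          le_trans (by simpa using norm_le_pi_norm (u j σ) i) (hM _ (hσU hσT))
        have h2 : ‖f i.succ (x j σ) - f i.succ (xbar σ)‖ ≤ k * δ :=
          (hLip _ _ _).trans (by nlinarith)
        exact mul_le_mul h1 h2 (norm_nonneg _) hMnn
      calc ‖f 0 (x j σ) - f 0 (xbar σ)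
            + ∑ i : Fin m, u j σ i • (f i.succ (x j σ) - f i.succ (xbar σ))‖
          ≤ ‖f 0 (x j σ) - f 0 (xbar σ)‖
            + ‖∑ i : Fin m, u j σ i • (f i.succ (x j σ) - f i.succ (xbar σ))‖ :=
            norm_add_le _ _
        _ ≤ k * δ + ∑ i : Fin m, ‖u j σ i • (f i.succ (x j σ) - f i.succ (xbar σ))‖ := by
            gcongr
            exact norm_sum_le _ _
        _ ≤ k * δ + ∑ _i : Fin m, M * (k * δ) := by
            gcongr with i
            exact hi i
        _ = k * δ + (m:ℝ) * (M * (k * δ)) := by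
            simp [Finset.sum_const, Finset.card_univ, nsmul_eq_mul]
        _ = k * (1 + (m:ℝ) * M) * δ := by ring
    have hnorm := intervalIntegral.norm_integral_le_of_norm_le_const_ae hbd
    have hDj : ‖D j‖ ≤ k * (1 + (m:ℝ) * M) * δ * |t - 0| := by
      simp only [hDdef]
      exact hnorm
    have hfinal : k * (1 + (m:ℝ) * M) * δ * |t - 0| < ε := by
      rw [sub_zero, abs_of_nonneg ht0, hδdef]
      have he : k * (1 + (m:ℝ) * M) * (ε / (k * (1 + (m:ℝ) * M) * (T + 1))) * t
          = ε * t / (T + 1) := by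
        field_simp
      rw [he, div_lt_iff₀ (by linarith : (0:ℝ) < T + 1)]
      nlinarith
    exact lt_of_le_of_lt hDj hfinal
  -- C tends to zero
  have hC0 : Tendsto C atTop (nhds 0) := by
    -- a globally continuous modification of `xbar`
    set y : ℝ → EuclideanSpace ℝ (Fin n) := fun σ => xbar (max 0 (min σ T)) with hydef
    have hymem : ∀ σ : ℝ, max 0 (min σ T) ∈ Set.Icc 0 T :=
      fun σ => ⟨le_max_left _ _, max_le hT.le (min_le_right σ T)⟩
    have hy : Continuous y := by
      apply hxbarc.comp_continuous
      · exact continuous_const.max (continuous_id.min continuous_const)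
      · exact hymem
    have hyeq : ∀ σ ∈ Set.Icc 0 T, y σ = xbar σ := by
      intro σ hσ
      rw [hydef]
      simp only [min_eq_left hσ.2, max_eq_right hσ.1]
    obtain ⟨Bx, hBx⟩ := (isCompact_Icc (a := (0:ℝ)) (b := T)).exists_bound_of_continuousOn hxbarc
    have hyb : ∀ σ : ℝ, ‖y σ‖ ≤ |Bx| := fun σ =>
      (hBx _ (hymem σ)).trans (le_abs_self _)
    -- coordinatewise convergence
    have hcoord : ∀ l : Fin n, Tendsto (fun j => C j l) atTop (nhds 0) := by
      intro l
      -- test function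
      have hψint : Integrable
          (fun σ (i : Fin m) => Set.indicator (Set.Ioc 0 t) (fun τ => f i.succ (y τ) l) σ)
          (volume.restrict (Set.Icc 0 T)) := by
        refine ⟨?_, ?_⟩
        · apply Measurable.aestronglyMeasurable
          apply measurable_pi_lambda
          intro i
          apply Measurable.indicator _ measurableSet_Ioc
          exact (((EuclideanSpace.proj (𝕜 := ℝ) l).continuous.comp ((hfc i.succ).comp hy) :
              Continuous fun σ => f i.succ (y σ) l)).measurable
        · apply HasFiniteIntegral.restrict_of_bounded (C := c * (1 + |Bx|)) measure_Icc_lt_top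
          apply Eventually.of_forall
          intro σ
          rw [pi_norm_le_iff_of_nonneg (by positivity)]
          intro i
          by_cases hmem : σ ∈ Set.Ioc 0 t
          · rw [Set.indicator_of_mem hmem]
            refine le_trans ?_ (le_trans (hgrowth i.succ (y σ)) ?_)
            · exact aux_coord _ l
            · have := hyb σ
              nlinarith
          · rw [Set.indicator_of_notMem hmem]
            simp only [norm_zero]
            positivity
      have hw := hweak _ hψint
      have hw2 : Tendsto (fun j => ∫ σ in (0:ℝ)..t, ∑ i : Fin m, u j σ i * f i.succ (y σ) l)
          atTop (nhds (∫ σ in (0:ℝ)..t, ∑ i : Fin m, ubar σ i * f i.succ (y σ) l)) := by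
        rw [← aux_ind ht0 htT ubar (fun τ i => f i.succ (y τ) l)]
        exact hw.congr (fun j => aux_ind ht0 htT (u j) (fun τ i => f i.succ (y τ) l))
      -- scalar integrabilities
      have hIu_l : ∀ j (i : Fin m),
          IntervalIntegrable (fun σ => u j σ i * f i.succ (y σ) l) volume 0 t := by
        intro j i
        have h := aux_II (E := ℝ) ht0 htT (humeas j i) (hu_bd j i)
          (Continuous.continuousOn ((EuclideanSpace.proj (𝕜 := ℝ) l).continuous.comp ((hfc i.succ).comp hy) :
            Continuous fun σ => f i.succ (y σ) l))
        simpa [smul_eq_mul] using h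
      have hIubar_l : ∀ (i : Fin m),
          IntervalIntegrable (fun σ => ubar σ i * f i.succ (y σ) l) volume 0 t := by
        intro i
        have h := aux_II (E := ℝ) ht0 htT (hubarmeas i) (hubar_bd i)
          (Continuous.continuousOn ((EuclideanSpace.proj (𝕜 := ℝ) l).continuous.comp ((hfc i.succ).comp hy) :
            Continuous fun σ => f i.succ (y σ) l))
        simpa [smul_eq_mul] using h
      -- identify the coordinate of C j
      have hCl : ∀ j, C j l
          = (∫ σ in (0:ℝ)..t, ∑ i : Fin m, u j σ i * f i.succ (y σ) l)
            - ∫ σ in (0:ℝ)..t, ∑ i : Fin m, ubar σ i * f i.succ (y σ) l := by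
        intro j
        have h1 := ContinuousLinearMap.intervalIntegral_comp_comm
          (EuclideanSpace.proj (𝕜 := ℝ) l) (hICterm j)
        have h2 : C j l = ∫ σ in (0:ℝ)..t,
            ∑ i : Fin m, (u j σ i - ubar σ i) * f i.succ (xbar σ) l := by
          have e0 : C j l = (EuclideanSpace.proj (𝕜 := ℝ) l) (C j) := rfl
          rw [e0]
          simp only [hCdef]
          rw [← h1]
          apply intervalIntegral.integral_congr
          intro σ _
          simp [Finset.sum_apply, smul_eq_mul]
        rw [h2]
        have h3 : (∫ σ in (0:ℝ)..t, ∑ i : Fin m, (u j σ i - ubar σ i) * f i.succ (xbar σ) l)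
            = ∫ σ in (0:ℝ)..t, ∑ i : Fin m, (u j σ i - ubar σ i) * f i.succ (y σ) l := by
          apply intervalIntegral.integral_congr
          intro σ hσ
          rw [Set.uIcc_of_le ht0] at hσ
          simp only [hyeq σ (hIccsub hσ)]
        rw [h3, ← intervalIntegral.integral_sub
          (aux_IIsum Finset.univ (fun i _ => hIu_l j i))
          (aux_IIsum Finset.univ (fun i _ => hIubar_l i))]
        apply intervalIntegral.integral_congr
        intro σ _
        simp [sub_mul, Finset.sum_sub_distrib]
      have h4 : Tendsto (fun j => C j l) atTop
          (nhds ((∫ σ in (0:ℝ)..t, ∑ i : Fin m, ubar σ i * f i.succ (y σ) l)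
            - ∫ σ in (0:ℝ)..t, ∑ i : Fin m, ubar σ i * f i.succ (y σ) l)) := by
        refine Tendsto.congr (fun j => (hCl j).symm) (hw2.sub_const _)
      simpa using h4
    -- assemble coordinates
    have h5 : Tendsto (fun j => (EuclideanSpace.equiv (Fin n) ℝ) (C j)) atTop
        (nhds (0 : Fin n → ℝ)) := by
      rw [tendsto_pi_nhds]
      intro l
      simpa using hcoord l
    have h6 := (((EuclideanSpace.equiv (Fin n) ℝ).symm.continuous.tendsto
      (0 : Fin n → ℝ)).comp h5)
    simpa [Function.comp_def] using h6
    
  -- conclusion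
  have h1 : Tendsto (fun j => x j t) atTop (nhds (xbar t)) :=
    hunif.tendsto_at ⟨ht0, htT⟩
  have h2 : Tendsto (fun j => x j t) atTop (nhds (x₀ + ∫ σ in (0:ℝ)..t,
      (f 0 (xbar σ) + ∑ i : Fin m, ubar σ i • f i.succ (xbar σ)))) := by
    have h3 := ((hD0.add hC0).add_const (∫ σ in (0:ℝ)..t,
      (f 0 (xbar σ) + ∑ i : Fin m, ubar σ i • f i.succ (xbar σ)))).const_add x₀
    simp only [zero_add] at h3
    apply h3.congr
    intro j
    rw [heq j t ⟨ht0, htT⟩, hsplit j]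
  exact tendsto_nhds_unique h1 h2
end
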